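/- Let V be a locally finite tree and k ∈ ℕ. Suppose V is not k-stable, and in addition, if k ≥ 1, that V is (k−1)-stable. Let x ∈ V be a position of infinite rank with 𝒢(x) = ∞(𝒜) for some 𝒜 with k ∉ 𝒜. Then there exist mex labellings f and f′ of V with f(x) = k and f′(x) ≠ k. -/

import Mathlib

open scoped Classical

universe u

/-- `PosP Γ n` is the set `Pₙ` of positions from which the second player can win
within `n` rounds: `P₀` is the set of terminal positions, and
`Pₙ₊₁ = {x : every option of x has an option in Pₙ}`. -/
def PosP {V : Type*} (Γ : V → Finset V) : ℕ → Set V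
  | 0 => {x | Γ x = ∅}
  | n + 1 => {x | ∀ y ∈ Γ x, ∃ z ∈ Γ y, z ∈ PosP Γ n}

/-- `PosN Γ n` is the set `Nₙ`: for `n ≥ 1`, `Nₙ = {x : some option of x lies in Pₙ₋₁}`. -/
def PosN {V : Type*} (Γ : V → Finset V) : ℕ → Set V
  | 0 => ∅
  | n + 1 => {x | ∃ y ∈ Γ x, y ∈ PosP Γ n}

/-- The P-positions `𝒫 = ⋃ₙ Pₙ` (second player wins). -/
def PPos {V : Type*} (Γ : V → Finset V) : Set V := ⋃ n, PosP Γ n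

/-- The N-positions `𝒩 = ⋃ₙ Nₙ` (first player wins). -/
def NPos {V : Type*} (Γ : V → Finset V) : Set V := ⋃ n, PosN Γ n

/-- The D-positions `𝒟 = V ∖ (𝒫 ∪ 𝒩)` (draws). -/
def DPos {V : Type*} (Γ : V → Finset V) : Set V := (PPos Γ ∪ NPos Γ)ᶜ

/-- The mex (least natural number not attained) of the values `g y`, `y ∈ s`. -/
noncomputable def mexF {V : Type*} (s : Finset V) (g : V → ℕ∞) : ℕ :=
  sInf {n : ℕ | ∀ y ∈ s, g y ≠ (n : ℕ∞)}

/-- The approximants `𝒢ₙ` of the extended Sprague-Grundy function. -/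
noncomputable def Gfun {V : Type*} (Γ : V → Finset V) : ℕ → V → ℕ∞
  | 0 => fun x => if Γ x = ∅ then 0 else ⊤
  | n + 1 => fun x =>
      let m := mexF (Γ x) (Gfun Γ n)
      if ∀ y ∈ Γ x, Gfun Γ n y ≤ (m : ℕ∞) ∨ ∃ z ∈ Γ y, Gfun Γ n z = (m : ℕ∞)
      then (m : ℕ∞) else ⊤

/-- `x` has finite rank with (finite) Sprague-Grundy value `m`:
`𝒢ₙ(x) = m` for all sufficiently large `n`. -/
def HasGVal {V : Type*} (Γ : V → Finset V) (x : V) (m : ℕ) : Prop :=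
  ∃ n₀ : ℕ, ∀ n ≥ n₀, Gfun Γ n x = (m : ℕ∞)

/-- `x` has infinite rank: `𝒢ₙ(x) = ∞` for all `n`. -/
def InfiniteRank {V : Type*} (Γ : V → Finset V) (x : V) : Prop :=
  ∀ n : ℕ, Gfun Γ n x = ⊤

/-- The rank of `x`: the least `n` with `𝒢ₙ(x) < ∞`, or `∞` if there is none. -/
noncomputable def rank {V : Type*} (Γ : V → Finset V) (x : V) : ℕ∞ :=
  sInf ((↑) '' {n : ℕ | Gfun Γ n x ≠ ⊤})

/-- For `x` of infinite rank, the set `𝒜` with `𝒢(x) = ∞(𝒜)`: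
the set of finite Sprague-Grundy values of finite-rank options of `x`. -/
def ValSet {V : Type*} (Γ : V → Finset V) (x : V) : Set ℕ :=
  {a | ∃ y ∈ Γ x, HasGVal Γ y a}

/-- The graph of the disjunctive sum: move in exactly one coordinate. -/
noncomputable def sumGraph {V W : Type*} (Γ : V → Finset V) (Δ : W → Finset W) :
    V × W → Finset (V × W) := fun p =>
  (Γ p.1).image (fun u => (u, p.2)) ∪ (Δ p.2).image (fun w => (p.1, w))

/-- Two (positions of possibly different) games lie in the same outcome class. -/
def SameOutcome {V W : Type*} (Γ : V → Finset V) (x : V) (Δ : W → Finset W) (y : W) : Prop :=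
  (x ∈ PPos Γ ↔ y ∈ PPos Δ) ∧ (x ∈ NPos Γ ↔ y ∈ NPos Δ) ∧ (x ∈ DPos Γ ↔ y ∈ DPos Δ)

/-- Equivalence of games: `G + X` and `H + X` have the same outcome for every
locally finite game `X`. -/
def GameEquiv {V W : Type*} (Γ : V → Finset V) (x : V) (Δ : W → Finset W) (y : W) : Prop :=
  ∀ (X : Type u) (Ξ : X → Finset X) (z : X),
    SameOutcome (sumGraph Γ Ξ) (x, z) (sumGraph Δ Ξ) (y, z)

/-- The nim heap `*m`: positions `0, …, m`, where from `k` one can move to any `j < k`. -/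
def nimGraph (m : ℕ) : Fin (m + 1) → Finset (Fin (m + 1)) :=
  fun k => Finset.univ.filter (fun j => j < k)

/-- The reduced graph `R(V)`: the induced graph on the complement of the P-positions. -/
noncomputable def reducedGraph {V : Type*} (Γ : V → Finset V) :
    {x : V // x ∉ PPos Γ} → Finset {x : V // x ∉ PPos Γ} := fun x =>
  (Γ x.1).subtype (fun y => y ∉ PPos Γ)

/-- The vertex set of `R^{(k)}(V)`: positions which do not have finite rank with
Sprague-Grundy value `< k`. -/
def RkSet {V : Type*} (Γ : V → Finset V) (k : ℕ) : Set V :=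
  {x | ¬ ∃ m < k, HasGVal Γ x m}

/-- The induced game graph `R^{(k)}(V)` on `RkSet Γ k`. -/
noncomputable def RkGraph {V : Type*} (Γ : V → Finset V) (k : ℕ) :
    RkSet Γ k → Finset (RkSet Γ k) := fun x =>
  (Γ x.1).subtype (fun y => y ∈ RkSet Γ k)

/-- `V` is `k`-stable: every infinite-rank position `x`, with `𝒢(x) = ∞(𝒜)`,
has `{0, 1, …, k} ⊆ 𝒜`. -/
def kStable {V : Type*} (Γ : V → Finset V) (k : ℕ) : Prop :=
  ∀ x, InfiniteRank Γ x → ∀ j ≤ k, j ∈ ValSet Γ x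

/-- `l` is a directed walk from `o` to `x` in the graph `Γ`. -/
def IsWalk {V : Type*} (Γ : V → Finset V) (o x : V) (l : List V) : Prop :=
  l.head? = some o ∧ l.getLast? = some x ∧ l.Chain' (fun a b => b ∈ Γ a)

/-- `Γ` is a tree with root `o`: `o` has no incoming arcs, and every vertex is
reached from `o` by a unique directed walk. -/
def IsTree {V : Type*} (Γ : V → Finset V) (o : V) : Prop :=
  (∀ x, o ∉ Γ x) ∧ ∀ x, ∃! l : List V, IsWalk Γ o x l

/-- `f` is a mex labelling: `f x` is the least natural number not attained by `f`
on the options of `x`, for every `x`. -/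
def MexLabelling {V : Type*} (Γ : V → Finset V) (f : V → ℕ) : Prop :=
  ∀ x, f x = sInf {n : ℕ | ∀ y ∈ Γ x, f y ≠ n}

section Aux

variable {V : Type*}

lemma exists_forall_ne {α : Type*} (s : Finset V) (g : V → α) (c : ℕ → α)
    (hc : Function.Injective c) : ∃ n : ℕ, ∀ y ∈ s, g y ≠ c n := by
  by_contra h
  push_neg at h
  choose w hw hw2 using h
  obtain ⟨a, b, hab, he⟩ := Finite.exists_ne_map_eq_of_infinite
    (fun n : ℕ => (⟨w n, hw n⟩ : {y // y ∈ s}))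
  apply hab
  apply hc
  rw [← hw2 a, ← hw2 b]
  simpa using congrArg (fun z : {y // y ∈ s} => g z.1) he

lemma mexF_not_attained (s : Finset V) (g : V → ℕ∞) :
    ∀ y ∈ s, g y ≠ (mexF s g : ℕ∞) := by
  have hne : {n : ℕ | ∀ y ∈ s, g y ≠ (n : ℕ∞)}.Nonempty := by
    obtain ⟨n, hn⟩ := exists_forall_ne s g (fun n => (n : ℕ∞))
      (fun a b hab => Nat.cast_injective hab)
    exact ⟨n, hn⟩
  exact Nat.sInf_mem hne

lemma mexF_lt_attained (s : Finset V) (g : V → ℕ∞) {j : ℕ} (hj : j < mexF s g) :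
    ∃ y ∈ s, g y = (j : ℕ∞) := by
  by_contra h
  push_neg at h
  have : mexF s g ≤ j := Nat.sInf_le (show j ∈ {n : ℕ | ∀ y ∈ s, g y ≠ (n : ℕ∞)} from h)
  omega

lemma mexF_eq_of (s : Finset V) (g : V → ℕ∞) {m : ℕ}
    (h1 : ∀ y ∈ s, g y ≠ (m : ℕ∞)) (h2 : ∀ j < m, ∃ y ∈ s, g y = (j : ℕ∞)) :
    mexF s g = m := by
  refine le_antisymm (Nat.sInf_le h1) ?_
  by_contra h
  push_neg at h
  obtain ⟨y, hy, hgy⟩ := h2 _ h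
  exact mexF_not_attained s g y hy hgy

variable (Γ : V → Finset V)

lemma Gfun_zero (v : V) : Gfun Γ 0 v = if Γ v = ∅ then 0 else ⊤ := rfl

lemma Gfun_succ (n : ℕ) (v : V) : Gfun Γ (n + 1) v =
    if ∀ y ∈ Γ v, Gfun Γ n y ≤ (mexF (Γ v) (Gfun Γ n) : ℕ∞) ∨
        ∃ z ∈ Γ y, Gfun Γ n z = (mexF (Γ v) (Gfun Γ n) : ℕ∞)
    then (mexF (Γ v) (Gfun Γ n) : ℕ∞) else ⊤ := rfl

lemma Gfun_succ_ne_top {n : ℕ} {v : V} (h : Gfun Γ (n + 1) v ≠ ⊤) :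
    Gfun Γ (n + 1) v = (mexF (Γ v) (Gfun Γ n) : ℕ∞) ∧
    ∀ y ∈ Γ v, Gfun Γ n y ≤ (mexF (Γ v) (Gfun Γ n) : ℕ∞) ∨
        ∃ z ∈ Γ y, Gfun Γ n z = (mexF (Γ v) (Gfun Γ n) : ℕ∞) := by
  rw [Gfun_succ] at h ⊢
  split at h
  · rw [if_pos ‹_›]; exact ⟨rfl, ‹_›⟩
  · exact absurd rfl h

lemma gfun_stab : ∀ n, ∀ v : V, Gfun Γ n v ≠ ⊤ → Gfun Γ (n + 1) v = Gfun Γ n v := by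
  intro n
  induction n with
  | zero =>
    intro v h
    rw [Gfun_zero] at h ⊢
    split at h
    · rename_i he
      rw [if_pos he]
      have hm : mexF (Γ v) (Gfun Γ 0) = 0 := by
        apply mexF_eq_of
        · intro y hy; rw [he] at hy; simp at hy
        · omega
      rw [Gfun_succ, hm, if_pos]
      · rfl
      · intro y hy; rw [he] at hy; simp at hy
    · exact absurd rfl h
  | succ n IH =>
    intro v h
    obtain ⟨hval, hcond⟩ := Gfun_succ_ne_top Γ h
    set m := mexF (Γ v) (Gfun Γ n) with hm
    -- children values at stage n+1
    have key : ∀ y ∈ Γ v, Gfun Γ (n + 1) y ≠ (m : ℕ∞) := by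
      intro y hy
      by_cases hfin : Gfun Γ n y = ⊤
      · -- y infinite at stage n
        rcases hcond y hy with hle | ⟨z, hz, hgz⟩
        · rw [hfin] at hle; simp at hle
        · -- mexF (Γ y) (Gfun Γ n) ≠ m since m is attained by z
          rw [Gfun_succ]
          split
          · intro hcontra
            have : mexF (Γ y) (Gfun Γ n) = m := by exact_mod_cast hcontra
            exact mexF_not_attained (Γ y) (Gfun Γ n) z hz (this ▸ hgz)
          · simp
      · rw [IH y hfin]
        intro hcontra
        exact mexF_not_attained (Γ v) (Gfun Γ n) y hy hcontra
    have key2 : ∀ j < m, ∃ y ∈ Γ v, Gfun Γ (n + 1) y = (j : ℕ∞) := by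
      intro j hj
      obtain ⟨y, hy, hgy⟩ := mexF_lt_attained (Γ v) (Gfun Γ n) hj
      refine ⟨y, hy, ?_⟩
      rw [IH y (by rw [hgy]; simp), hgy]
    have hm' : mexF (Γ v) (Gfun Γ (n + 1)) = m := mexF_eq_of _ _ key key2
    rw [Gfun_succ, hm', hval, if_pos]
    intro y hy
    rcases hcond y hy with hle | ⟨z, hz, hgz⟩
    · left
      have hne : Gfun Γ n y ≠ ⊤ := fun hc => by rw [hc] at hle; simp at hle
      rw [IH y hne]; exact hle
    · right
      exact ⟨z, hz, by rw [IH z (by rw [hgz]; simp), hgz]⟩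

lemma gfun_stab_ge {n : ℕ} {v : V} {a : ℕ} (h : Gfun Γ n v = (a : ℕ∞)) :
    ∀ N, n ≤ N → Gfun Γ N v = (a : ℕ∞) := by
  intro N hN
  induction N with
  | zero =>
    have : n = 0 := by omega
    rw [← this]; exact h
  | succ N IH =>
    rcases Nat.lt_or_ge n (N + 1) with hlt | hge
    · have hIH := IH (by omega)
      rw [gfun_stab Γ N v (by rw [hIH]; simp), hIH]
    · have : n = N + 1 := by omega
      rw [← this]; exact h

lemma hasGVal_of_gfun {n : ℕ} {v : V} {a : ℕ} (h : Gfun Γ n v = (a : ℕ∞)) :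
    HasGVal Γ v a := ⟨n, fun N hN => gfun_stab_ge Γ h N hN⟩

lemma hasGVal_unique {v : V} {a b : ℕ} (ha : HasGVal Γ v a) (hb : HasGVal Γ v b) :
    a = b := by
  obtain ⟨n₁, h1⟩ := ha
  obtain ⟨n₂, h2⟩ := hb
  have e1 := h1 (max n₁ n₂) (le_max_left _ _)
  have e2 := h2 (max n₁ n₂) (le_max_right _ _)
  rw [e1] at e2
  exact_mod_cast e2

lemma rank_dichotomy (v : V) : InfiniteRank Γ v ∨ ∃ a, HasGVal Γ v a := by
  by_cases h : InfiniteRank Γ v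
  · exact Or.inl h
  · right
    simp only [InfiniteRank, not_forall] at h
    obtain ⟨n, hn⟩ := h
    obtain ⟨a, ha⟩ := Option.ne_none_iff_exists'.mp hn
    exact ⟨a, hasGVal_of_gfun Γ ha⟩

lemma not_infiniteRank_of_hasGVal {v : V} {a : ℕ} (h : HasGVal Γ v a) :
    ¬ InfiniteRank Γ v := by
  intro hinf
  obtain ⟨n, hn⟩ := h
  have := hn n le_rfl
  rw [hinf n] at this
  exact (by simp : (⊤ : ℕ∞) ≠ (a : ℕ∞)) this

end Aux
section Struct

variable {V : Type*} (Γ : V → Finset V)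

open Filter

/-- canonical finite Grundy value -/
noncomputable def gval (v : V) : ℕ :=
  if h : ∃ a, HasGVal Γ v a then h.choose else 0

lemma gval_spec {v : V} (h : ¬ InfiniteRank Γ v) : HasGVal Γ v (gval Γ v) := by
  obtain ⟨a, ha⟩ := (rank_dichotomy Γ v).resolve_left h
  rw [gval, dif_pos ⟨a, ha⟩]
  exact (⟨a, ha⟩ : ∃ a, HasGVal Γ v a).choose_spec

lemma gval_eq {v : V} {a : ℕ} (h : HasGVal Γ v a) : gval Γ v = a :=
  hasGVal_unique Γ (gval_spec Γ (not_infiniteRank_of_hasGVal Γ h)) h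

lemma hasGVal_eventually {v : V} {a : ℕ} (h : HasGVal Γ v a) :
    ∀ᶠ N in atTop, Gfun Γ N v = (a : ℕ∞) := by
  obtain ⟨n₀, hn₀⟩ := h
  exact eventually_atTop.mpr ⟨n₀, hn₀⟩

/-- structure at a finite-rank vertex -/
lemma G2_no_child (v : V) {m : ℕ} (h : HasGVal Γ v m) :
    ∀ y ∈ Γ v, ¬ HasGVal Γ y m := by
  intro y hy hym
  obtain ⟨n₀, h0⟩ := h
  obtain ⟨n₁, h1⟩ := hym
  set N := max n₀ n₁ with hN
  have hv : Gfun Γ (N + 1) v = (m : ℕ∞) := h0 _ (by omega)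
  obtain ⟨hval, _⟩ := Gfun_succ_ne_top Γ (by rw [hv]; simp)
  have hmex : mexF (Γ v) (Gfun Γ N) = m := by
    rw [hv] at hval; exact_mod_cast hval.symm
  exact mexF_not_attained (Γ v) (Gfun Γ N) y hy (hmex ▸ h1 N (by omega))

lemma G2_cover (v : V) {m : ℕ} (h : HasGVal Γ v m) :
    ∀ j < m, ∃ y ∈ Γ v, HasGVal Γ y j := by
  intro j hj
  obtain ⟨n₀, h0⟩ := h
  have hv : Gfun Γ (n₀ + 1) v = (m : ℕ∞) := h0 _ (by omega)
  obtain ⟨hval, _⟩ := Gfun_succ_ne_top Γ (by rw [hv]; simp)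
  have hmex : mexF (Γ v) (Gfun Γ n₀) = m := by
    rw [hv] at hval; exact_mod_cast hval.symm
  obtain ⟨y, hy, hgy⟩ := mexF_lt_attained (Γ v) (Gfun Γ n₀) (hmex ▸ hj)
  exact ⟨y, hy, hasGVal_of_gfun Γ hgy⟩

lemma G2_inf_child (v : V) {m : ℕ} (h : HasGVal Γ v m) :
    ∀ y ∈ Γ v, InfiniteRank Γ y → m ∈ ValSet Γ y := by
  intro y hy hyinf
  obtain ⟨n₀, h0⟩ := h
  have hv : Gfun Γ (n₀ + 1) v = (m : ℕ∞) := h0 _ (by omega)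
  obtain ⟨hval, hcond⟩ := Gfun_succ_ne_top Γ (by rw [hv]; simp)
  have hmex : mexF (Γ v) (Gfun Γ n₀) = m := by
    rw [hv] at hval; exact_mod_cast hval.symm
  rcases hcond y hy with hle | ⟨z, hz, hgz⟩
  · rw [hyinf n₀, hmex] at hle; simp at hle
  · exact ⟨z, hz, hasGVal_of_gfun Γ (by rw [hgz, hmex])⟩

/-- Key lemma: an infinite-rank vertex whose value set contains `[0,k)` but not `k`
has an infinite-rank child whose value set misses `k`. -/
lemma G3 {k : ℕ} {v : V} (hv : InfiniteRank Γ v)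
    (hcov : ∀ j < k, j ∈ ValSet Γ v) (hk : k ∉ ValSet Γ v) :
    ∃ y ∈ Γ v, InfiniteRank Γ y ∧ k ∉ ValSet Γ y := by
  classical
  -- eventual facts about children
  have hev : ∀ᶠ N in atTop, ∀ y ∈ Γ v,
      (¬ InfiniteRank Γ y → Gfun Γ N y = (gval Γ y : ℕ∞)) ∧
      (¬ InfiniteRank Γ y → k < gval Γ y →
        ∃ z ∈ Γ y, Gfun Γ N z = (k : ℕ∞)) ∧
      (InfiniteRank Γ y → k ∈ ValSet Γ y → ∃ z ∈ Γ y, Gfun Γ N z = (k : ℕ∞)) := by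
    rw [eventually_all_finset]
    intro y hy
    have e1 : ∀ᶠ N in atTop, ¬ InfiniteRank Γ y → Gfun Γ N y = (gval Γ y : ℕ∞) := by
      by_cases h : InfiniteRank Γ y
      · filter_upwards with N hN; exact absurd h hN
      · filter_upwards [hasGVal_eventually Γ (gval_spec Γ h)] with N hN _; exact hN
    have e2 : ∀ᶠ N in atTop, ¬ InfiniteRank Γ y → k < gval Γ y →
        ∃ z ∈ Γ y, Gfun Γ N z = (k : ℕ∞) := by
      by_cases h : ¬ InfiniteRank Γ y ∧ k < gval Γ y
      · obtain ⟨z, hz, hzk⟩ := G2_cover Γ y (gval_spec Γ h.1) k h.2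
        filter_upwards [hasGVal_eventually Γ hzk] with N hN _ _
        exact ⟨z, hz, hN⟩
      · filter_upwards with N h1 h2; exact absurd ⟨h1, h2⟩ h
    have e3 : ∀ᶠ N in atTop, InfiniteRank Γ y → k ∈ ValSet Γ y →
        ∃ z ∈ Γ y, Gfun Γ N z = (k : ℕ∞) := by
      by_cases h : k ∈ ValSet Γ y
      · obtain ⟨z, hz, hzk⟩ := h
        filter_upwards [hasGVal_eventually Γ hzk] with N hN _ _
        exact ⟨z, hz, hN⟩
      · filter_upwards with N _ h2; exact absurd h2 h
    filter_upwards [e1, e2, e3] with N h1 h2 h3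
    exact ⟨h1, h2, h3⟩
  -- eventual coverage witnesses for j < k
  have hcov' : ∀ᶠ N in atTop, ∀ j ∈ Finset.range k, ∃ y ∈ Γ v, Gfun Γ N y = (j : ℕ∞) := by
    rw [eventually_all_finset]
    intro j hj
    obtain ⟨y, hy, hyj⟩ := hcov j (Finset.mem_range.mp hj)
    filter_upwards [hasGVal_eventually Γ hyj] with N hN
    exact ⟨y, hy, hN⟩
  obtain ⟨N, hN1, hN2⟩ := (hev.and hcov').exists
  -- compute the mex at stage N
  have hmex : mexF (Γ v) (Gfun Γ N) = k := by
    apply mexF_eq_of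
    · intro y hy hcontra
      by_cases h : InfiniteRank Γ y
      · rw [h N] at hcontra; simp at hcontra
      · rw [(hN1 y hy).1 h] at hcontra
        have : gval Γ y = k := by exact_mod_cast hcontra
        exact hk ⟨y, hy, this ▸ gval_spec Γ h⟩
    · intro j hj
      exact hN2 j (Finset.mem_range.mpr hj)
  -- the condition must fail
  have hfail : ¬ ∀ y ∈ Γ v, Gfun Γ N y ≤ (mexF (Γ v) (Gfun Γ N) : ℕ∞) ∨
      ∃ z ∈ Γ y, Gfun Γ N z = (mexF (Γ v) (Gfun Γ N) : ℕ∞) := by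
    intro hcond
    have := hv (N + 1)
    rw [Gfun_succ, if_pos hcond] at this
    simp at this
  push_neg at hfail
  obtain ⟨y, hy, hyle, hyz⟩ := hfail
  rw [hmex] at hyle hyz
  refine ⟨y, hy, ?_, ?_⟩
  · by_contra h
    have hgv := (hN1 y hy).1 h
    have hgt : k < gval Γ y := by
      rw [hgv] at hyle
      exact_mod_cast hyle
    obtain ⟨z, hz, hzk⟩ := (hN1 y hy).2.1 h hgt
    exact hyz z hz hzk
  · intro hkv
    have hinf : InfiniteRank Γ y := by
      by_contra h
      have hgv := (hN1 y hy).1 h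
      have hgt : k < gval Γ y := by
        rw [hgv] at hyle
        exact_mod_cast hyle
      obtain ⟨z, hz, hzk⟩ := (hN1 y hy).2.1 h hgt
      exact hyz z hz hzk
    obtain ⟨z, hz, hzk⟩ := (hN1 y hy).2.2 hinf hkv
    exact hyz z hz hzk

end Struct
section UpIter

variable {V : Type*}

/-- ℕ-valued mex, matching `MexLabelling`. -/
noncomputable def mexN (s : Finset V) (g : V → ℕ) : ℕ :=
  sInf {n : ℕ | ∀ y ∈ s, g y ≠ n}

lemma mexN_not_attained (s : Finset V) (g : V → ℕ) :
    ∀ y ∈ s, g y ≠ mexN s g := by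
  have hne : {n : ℕ | ∀ y ∈ s, g y ≠ n}.Nonempty := by
    obtain ⟨n, hn⟩ := exists_forall_ne s g id Function.injective_id
    exact ⟨n, hn⟩
  exact Nat.sInf_mem hne

lemma mexN_lt_attained (s : Finset V) (g : V → ℕ) {j : ℕ} (hj : j < mexN s g) :
    ∃ y ∈ s, g y = j := by
  by_contra h
  push_neg at h
  have : mexN s g ≤ j := Nat.sInf_le (show j ∈ {n : ℕ | ∀ y ∈ s, g y ≠ n} from h)
  omega

lemma mexN_eq_of (s : Finset V) (g : V → ℕ) {m : ℕ}
    (h1 : ∀ y ∈ s, g y ≠ m) (h2 : ∀ j < m, ∃ y ∈ s, g y = j) :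
    mexN s g = m := by
  refine le_antisymm (Nat.sInf_le h1) ?_
  by_contra h
  push_neg at h
  obtain ⟨y, hy, hgy⟩ := h2 _ h
  exact mexN_not_attained s g y hy hgy

lemma mexN_congr (s : Finset V) {g g' : V → ℕ} (h : ∀ y ∈ s, g y = g' y) :
    mexN s g = mexN s g' := by
  unfold mexN
  congr 1
  ext n
  constructor <;> intro hn y hy
  · rw [← h y hy]; exact hn y hy
  · rw [h y hy]; exact hn y hy

lemma mexN_le_card (s : Finset V) (g : V → ℕ) : mexN s g ≤ s.card := by
  by_contra h
  push_neg at h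
  have hall : ∀ j < s.card + 1, ∃ y ∈ s, g y = j := fun j hj =>
    mexN_lt_attained s g (by omega)
  choose w hw hw2 using hall
  have hinj : Function.Injective
      (fun i : Fin (s.card + 1) => (⟨w i.1 i.2, hw i.1 i.2⟩ : {y // y ∈ s})) := by
    intro a b hab
    have : g (w a.1 a.2) = g (w b.1 b.2) := by
      simpa using congrArg (fun z : {y // y ∈ s} => g z.1) hab
    rw [hw2 a.1 a.2, hw2 b.1 b.2] at this
    exact Fin.ext this
  have hcard := Fintype.card_le_of_injective _ hinj
  simp [Fintype.card_coe] at hcard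

/-- the one-step mex propagation operator -/
noncomputable def up (Γ : V → Finset V) (g : V → ℕ) : V → ℕ :=
  fun v => mexN (Γ v) g

/-- The big invariant: starting from a good seed, the iterates of `up` keep
finite-rank vertices at their Grundy value and respect the colouring. -/
lemma up_invariant (Γ : V → Finset V) {k : ℕ}
    (hstab : ∀ v, InfiniteRank Γ v → ∀ j < k, j ∈ ValSet Γ v)
    (col : V → Option Bool)
    (P1 : ∀ v c, col v = some c → InfiniteRank Γ v ∧ k ∉ ValSet Γ v)
    (P2 : ∀ v, col v = some true → ∀ y ∈ Γ v, InfiniteRank Γ y → k ∉ ValSet Γ y →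
      col y = some false)
    (P3 : ∀ v, col v = some false → ∃ y ∈ Γ v, col y = some true)
    (s : V → ℕ)
    (hseedA : ∀ v, ¬ InfiniteRank Γ v → s v = gval Γ v)
    (hseedB : ∀ v, InfiniteRank Γ v → s v ∉ ValSet Γ v)
    (hseedC : ∀ v, col v = some true → s v = k)
    (hseedD : ∀ v, col v = some false → s v ≠ k) :
    ∀ j v, (¬ InfiniteRank Γ v → (up Γ)^[j] s v = gval Γ v) ∧
      (InfiniteRank Γ v → (up Γ)^[j] s v ∉ ValSet Γ v) ∧
      (col v = some true → (up Γ)^[j] s v = k) ∧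
      (col v = some false → (up Γ)^[j] s v ≠ k) := by
  intro j
  induction j with
  | zero =>
    intro v
    exact ⟨hseedA v, hseedB v, hseedC v, hseedD v⟩
  | succ j IH =>
    intro v
    have hit : (up Γ)^[j + 1] s v = mexN (Γ v) ((up Γ)^[j] s) := by
      rw [Function.iterate_succ_apply']
      rfl
    constructor
    · -- finite rank: value is gval
      intro hfin
      rw [hit]
      have hval := gval_spec Γ hfin
      apply mexN_eq_of
      · intro y hy
        by_cases hyf : InfiniteRank Γ y
        · intro hcontra
          exact (IH y).2.1 hyf (hcontra ▸ G2_inf_child Γ v hval y hy hyf)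
        · rw [(IH y).1 hyf]
          intro hcontra
          exact G2_no_child Γ v hval y hy (hcontra ▸ gval_spec Γ hyf)
      · intro i hi
        obtain ⟨y, hy, hyi⟩ := G2_cover Γ v hval i hi
        refine ⟨y, hy, ?_⟩
        rw [(IH y).1 (not_infiniteRank_of_hasGVal Γ hyi), gval_eq Γ hyi]
    refine ⟨?_, ?_, ?_⟩
    · -- infinite rank: value avoids ValSet
      intro hinf
      rw [hit]
      intro ⟨y, hy, hya⟩
      have : (up Γ)^[j] s y = mexN (Γ v) ((up Γ)^[j] s) := by
        rw [(IH y).1 (not_infiniteRank_of_hasGVal Γ hya), gval_eq Γ hya]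
      exact mexN_not_attained (Γ v) ((up Γ)^[j] s) y hy this
    · -- colour true: value k
      intro hcol
      obtain ⟨hinf, hknot⟩ := P1 v true hcol
      rw [hit]
      apply mexN_eq_of
      · intro y hy
        by_cases hyf : InfiniteRank Γ y
        · by_cases hky : k ∈ ValSet Γ y
          · intro hcontra
            exact (IH y).2.1 hyf (hcontra ▸ hky)
          · exact (IH y).2.2.2 (P2 v hcol y hy hyf hky)
        · rw [(IH y).1 hyf]
          intro hcontra
          exact hknot ⟨y, hy, hcontra ▸ gval_spec Γ hyf⟩
      · intro i hi
        obtain ⟨y, hy, hyi⟩ := hstab v hinf i hi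
        refine ⟨y, hy, ?_⟩
        rw [(IH y).1 (not_infiniteRank_of_hasGVal Γ hyi), gval_eq Γ hyi]
    · -- colour false: value ≠ k
      intro hcol
      obtain ⟨y, hy, hytrue⟩ := P3 v hcol
      rw [hit]
      intro hcontra
      exact mexN_not_attained (Γ v) ((up Γ)^[j] s) y hy
        (((IH y).2.2.1 hytrue).trans hcontra.symm)

end UpIter
section Tree

variable {V : Type*} {Γ : V → Finset V} {o : V}

noncomputable def walkTo (ht : IsTree Γ o) (v : V) : List V := (ht.2 v).exists.choose

lemma walkTo_spec (ht : IsTree Γ o) (v : V) : IsWalk Γ o v (walkTo ht v) :=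
  (ht.2 v).exists.choose_spec

lemma walkTo_uniq (ht : IsTree Γ o) {v : V} {l : List V} (h : IsWalk Γ o v l) :
    l = walkTo ht v := by
  obtain ⟨l', hl', huniq⟩ := ht.2 v
  rw [huniq l h, huniq (walkTo ht v) (walkTo_spec ht v)]

lemma walkTo_ne_nil (ht : IsTree Γ o) (v : V) : walkTo ht v ≠ [] := by
  intro h
  have := (walkTo_spec ht v).1
  rw [h] at this
  simp at this

lemma walkTo_child (ht : IsTree Γ o) {v y : V} (hy : y ∈ Γ v) :
    walkTo ht y = walkTo ht v ++ [y] := by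
  refine (walkTo_uniq ht ?_).symm
  obtain ⟨h1, h2, h3⟩ := walkTo_spec ht v
  refine ⟨?_, ?_, ?_⟩
  · rw [List.head?_append_of_ne_nil _ (walkTo_ne_nil ht v)]; exact h1
  · simp
  · unfold List.Chain'; rw [List.isChain_append]
    refine ⟨h3, List.isChain_singleton y, ?_⟩
    intro a ha b hb
    simp only [List.head?_cons, Option.mem_def, Option.some.injEq] at hb
    rw [h2] at ha
    simp only [Option.mem_def, Option.some.injEq] at ha
    rw [← ha, ← hb]
    exact hy

/-- depth -/
noncomputable def dep (ht : IsTree Γ o) (v : V) : ℕ := (walkTo ht v).length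

lemma dep_child (ht : IsTree Γ o) {v y : V} (hy : y ∈ Γ v) :
    dep ht y = dep ht v + 1 := by
  unfold dep
  rw [walkTo_child ht hy]
  simp

lemma parent_unique (ht : IsTree Γ o) {v v' y : V} (h : y ∈ Γ v) (h' : y ∈ Γ v') :
    v = v' := by
  have e := (walkTo_child ht h).symm.trans (walkTo_child ht h')
  have := (List.append_inj' e rfl).1
  have hv := (walkTo_spec ht v).2.1
  have hv' := (walkTo_spec ht v').2.1
  rw [this] at hv
  rw [hv] at hv'
  simpa using hv'

/-- strict-ancestor relation -/
def Anc (ht : IsTree Γ o) (v x : V) : Prop :=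
  (walkTo ht v).length < (walkTo ht x).length ∧ walkTo ht v <+: walkTo ht x

lemma anc_of_child (ht : IsTree Γ o) {v x : V} (h : x ∈ Γ v) : Anc ht v x := by
  rw [Anc, walkTo_child ht h]
  constructor
  · simp
  · exact ⟨[x], rfl⟩

lemma anc_trans_parent (ht : IsTree Γ o) {p v x : V} (hpv : v ∈ Γ p)
    (h : Anc ht v x) : Anc ht p x := by
  have h2 := anc_of_child ht hpv
  exact ⟨lt_trans h2.1 h.1, h2.2.trans h.2⟩

lemma anc_ne (ht : IsTree Γ o) {v x : V} (h : Anc ht v x) : v ≠ x := by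
  intro he; rw [he] at h; exact absurd h.1 (lt_irrefl _)

lemma not_self_mem (ht : IsTree Γ o) {v : V} (h : v ∈ Γ v) : False :=
  anc_ne ht (anc_of_child ht h) rfl

/-- parent function -/
noncomputable def par (Γ : V → Finset V) (v : V) : Option V :=
  if h : ∃ p, v ∈ Γ p then some h.choose else none

lemma par_mem {v p : V} (h : par Γ v = some p) : v ∈ Γ p := by
  rw [par] at h
  split at h
  · rename_i he
    obtain ⟨rfl⟩ := Option.some.injEq _ _ ▸ h
    simpa using he.choose_spec
  · simp at h

lemma par_eq (ht : IsTree Γ o) {v p : V} (h : v ∈ Γ p) : par Γ v = some p := by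
  rw [par, dif_pos ⟨p, h⟩]
  congr 1
  exact parent_unique ht (⟨p, h⟩ : ∃ p, v ∈ Γ p).choose_spec h

end Tree

section Colour

variable {V : Type*} (Γ : V → Finset V) (k : ℕ) (x : V) (b₀ : Bool) (δ : V → V)

noncomputable def colAux : ℕ → V → Option Bool
  | 0, v => if v = x then some b₀ else none
  | n + 1, v =>
    if v = x then some b₀ else
      (par Γ v).elim none (fun p =>
        (colAux n p).elim none (fun b =>
          if b then (if InfiniteRank Γ v ∧ k ∉ ValSet Γ v then some false else none)
          else (if v = δ p then some true else none)))

variable {Γ} {o : V} (ht : IsTree Γ o)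

noncomputable def colV (v : V) : Option Bool := colAux Γ k x b₀ δ (dep ht v) v

lemma colV_x : colV k x b₀ δ ht x = some b₀ := by
  unfold colV
  cases h : dep ht x with
  | zero => rw [colAux, if_pos rfl]
  | succ n => rw [colAux, if_pos rfl]

lemma colV_child {v y : V} (hy : y ∈ Γ v) (hyx : y ≠ x) :
    colV k x b₀ δ ht y = (colV k x b₀ δ ht v).elim none (fun b =>
      if b then (if InfiniteRank Γ y ∧ k ∉ ValSet Γ y then some false else none)
      else (if y = δ v then some true else none)) := by
  unfold colV
  rw [dep_child ht hy, colAux, if_neg hyx, par_eq ht hy]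
  rfl

lemma colV_anc_none : ∀ v, Anc ht v x → colV k x b₀ δ ht v = none := by
  have H : ∀ n v, dep ht v = n → Anc ht v x → colV k x b₀ δ ht v = none := by
    intro n
    induction n with
    | zero =>
      intro v hdep hanc
      unfold colV
      rw [hdep, colAux, if_neg (anc_ne ht hanc)]
    | succ n IH =>
      intro v hdep hanc
      unfold colV
      rw [hdep, colAux, if_neg (anc_ne ht hanc)]
      cases hpar : par Γ v with
      | none => rfl
      | some p =>
        have hvp := par_mem hpar
        have hdp : dep ht p = n := by
          have := dep_child ht hvp
          omega
        have := IH p hdp (anc_trans_parent ht hvp hanc)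
        unfold colV at this
        rw [hdp] at this
        simp only [Option.elim]
        rw [this]
  exact fun v => H (dep ht v) v rfl

end Colour
section ColourProps

variable {V : Type*} {Γ : V → Finset V} {o : V} (ht : IsTree Γ o)
variable (k : ℕ) (x : V) (b₀ : Bool) (δ : V → V)
variable (hx : InfiniteRank Γ x ∧ k ∉ ValSet Γ x)
variable (hδ : ∀ v, InfiniteRank Γ v → k ∉ ValSet Γ v →
    δ v ∈ Γ v ∧ InfiniteRank Γ (δ v) ∧ k ∉ ValSet Γ (δ v))

include hx hδ in
lemma colV_P1 : ∀ v c, colV k x b₀ δ ht v = some c →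
    InfiniteRank Γ v ∧ k ∉ ValSet Γ v := by
  have H : ∀ n v c, dep ht v = n → colV k x b₀ δ ht v = some c →
      InfiniteRank Γ v ∧ k ∉ ValSet Γ v := by
    intro n
    induction n using Nat.strong_induction_on with
    | _ n IH =>
      intro v c hdep hcol
      by_cases hvx : v = x
      · rw [hvx]; exact hx
      · unfold colV at hcol
        cases hn : n with
        | zero =>
          rw [hdep, hn, colAux, if_neg hvx] at hcol
          simp at hcol
        | succ m =>
          rw [hdep, hn, colAux, if_neg hvx] at hcol
          cases hpar : par Γ v with
          | none => rw [hpar] at hcol; simp at hcol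
          | some p =>
            rw [hpar] at hcol
            simp only [Option.elim] at hcol
            have hvp := par_mem hpar
            have hdp : dep ht p = m := by
              have := dep_child ht hvp; omega
            cases hcp : colAux Γ k x b₀ δ m p with
            | none => rw [hcp] at hcol; simp at hcol
            | some b =>
              rw [hcp] at hcol
              simp only [Option.elim] at hcol
              have hcolp : colV k x b₀ δ ht p = some b := by
                unfold colV; rw [hdp]; exact hcp
              cases b with
              | true =>
                rw [if_pos rfl] at hcol
                split at hcol
                · rename_i hcond
                  exact hcond
                · exact absurd hcol (by simp)
              | false =>
                rw [if_neg (by simp)] at hcol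
                split at hcol
                · rename_i heq
                  have hp := IH m (by omega) p false hdp hcolp
                  have := hδ p hp.1 hp.2
                  rw [heq]
                  exact ⟨this.2.1, this.2.2⟩
                · exact absurd hcol (by simp)
  exact fun v c => H (dep ht v) v c rfl

include hx hδ in
lemma colV_P2 : ∀ v, colV k x b₀ δ ht v = some true → ∀ y ∈ Γ v,
    InfiniteRank Γ y → k ∉ ValSet Γ y → colV k x b₀ δ ht y = some false := by
  intro v hcol y hy hinf hknot
  by_cases hyx : y = x
  · exfalso
    have := colV_anc_none k x b₀ δ ht v (hyx ▸ anc_of_child ht hy)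
    rw [this] at hcol; simp at hcol
  · rw [colV_child k x b₀ δ ht hy hyx, hcol]
    simp only [Option.elim]
    rw [if_pos trivial, if_pos ⟨hinf, hknot⟩]

include hx hδ in
lemma colV_P3 : ∀ v, colV k x b₀ δ ht v = some false →
    ∃ y ∈ Γ v, colV k x b₀ δ ht y = some true := by
  intro v hcol
  have hp := colV_P1 ht k x b₀ δ hx hδ v false hcol
  obtain ⟨hmem, hinf', hknot'⟩ := hδ v hp.1 hp.2
  refine ⟨δ v, hmem, ?_⟩
  by_cases hdx : δ v = x
  · exfalso
    have := colV_anc_none k x b₀ δ ht v (hdx ▸ anc_of_child ht hmem)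
    rw [this] at hcol; simp at hcol
  · rw [colV_child k x b₀ δ ht hmem hdx, hcol]
    simp only [Option.elim]
    rw [if_neg (by simp), if_pos trivial]

end ColourProps
section Limit

open Filter

variable {V : Type*}

lemma uf_exists_value {h : ℕ → ℕ} {S : Finset ℕ} (hS : ∀ n, h n ∈ S) :
    ∃ a, {n : ℕ | h n = a} ∈ Filter.hyperfilter ℕ := by
  by_contra hc
  push_neg at hc
  have : ∀ᶠ n in (Filter.hyperfilter ℕ : Filter ℕ), ∀ a ∈ S, h n ≠ a := by
    rw [eventually_all_finset]
    intro a ha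
    have := (Ultrafilter.compl_mem_iff_notMem.mpr (hc a))
    filter_upwards [this] with n hn
    exact hn
  obtain ⟨n, hn⟩ := this.exists
  exact hn (h n) (hS n) rfl

lemma limit_labelling (Γ : V → Finset V) (d : V → ℕ)
    (hd : ∀ v, ∀ y ∈ Γ v, d y = d v + 1) (s : V → ℕ) :
    ∃ f : V → ℕ, MexLabelling Γ f ∧ ∀ v, ∃ j ≥ 1, f v = (up Γ)^[j] s v := by
  classical
  set g : ℕ → V → ℕ := fun n v => (up Γ)^[n - d v] s v with hg
  have hbound : ∀ v n, g n v ∈ insert (s v) (Finset.range ((Γ v).card + 1)) := by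
    intro v n
    rcases Nat.eq_zero_or_pos (n - d v) with h0 | hpos
    · simp [hg, h0]
    · obtain ⟨j, hj⟩ := Nat.exists_eq_succ_of_ne_zero (by omega : n - d v ≠ 0)
      have : g n v = mexN (Γ v) ((up Γ)^[j] s) := by
        rw [hg]
        simp only
        rw [hj, Function.iterate_succ_apply']
        rfl
      rw [this]
      exact Finset.mem_insert_of_mem (Finset.mem_range.mpr
        (by have := mexN_le_card (Γ v) ((up Γ)^[j] s); omega))
  have hval : ∀ v : V, ∃ a, {n : ℕ | g n v = a} ∈ Filter.hyperfilter ℕ :=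
    fun v => uf_exists_value (hbound v)
  choose f hf using hval
  have key : ∀ v, ∃ n, g n v = f v ∧ (∀ y ∈ Γ v, g n y = f y) ∧ d v < n := by
    intro v
    have e2 : ∀ᶠ n in (Filter.hyperfilter ℕ : Filter ℕ), ∀ y ∈ Γ v, g n y = f y := by
      rw [eventually_all_finset]
      intro y _
      exact hf y
    have e3 : ∀ᶠ n in (Filter.hyperfilter ℕ : Filter ℕ), d v < n :=
      (eventually_gt_atTop (d v)).filter_mono Nat.hyperfilter_le_atTop
    have e1 : ∀ᶠ n in (Filter.hyperfilter ℕ : Filter ℕ), g n v = f v := hf v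
    obtain ⟨n, h1, h2, h3⟩ := (e1.and (e2.and e3)).exists
    exact ⟨n, h1, h2, h3⟩
  refine ⟨f, ?_, ?_⟩
  · intro v
    obtain ⟨n, h1, h2, h3⟩ := key v
    have step : f v = mexN (Γ v) ((up Γ)^[n - d v - 1] s) := by
      rw [← h1, hg]
      simp only
      obtain ⟨j, hj⟩ := Nat.exists_eq_succ_of_ne_zero (by omega : n - d v ≠ 0)
      rw [hj, Function.iterate_succ_apply']
      have : j = n - d v - 1 := by omega
      rw [this]
      rfl
    have congr1 : mexN (Γ v) ((up Γ)^[n - d v - 1] s) = mexN (Γ v) f := by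
      apply mexN_congr
      intro y hy
      rw [← h2 y hy, hg]
      simp only
      have : n - d y = n - d v - 1 := by rw [hd v y hy]; omega
      rw [this]
    show f v = sInf {m : ℕ | ∀ y ∈ Γ v, f y ≠ m}
    rw [step, congr1]
    rfl
  · intro v
    obtain ⟨n, h1, _, h3⟩ := key v
    exact ⟨n - d v, by omega, h1.symm⟩

end Limit

set_option maxHeartbeats 1000000 in
/-- if the locally finite tree `V` is not `k`-stable (but is
`(k−1)`-stable when `k ≥ 1`), and `x` has infinite rank with `𝒢(x) = ∞(𝒜)`
for some `𝒜` with `k ∉ 𝒜`, then there are mex labellings `f, f′` of `V` with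
`f x = k` and `f′ x ≠ k`. -/
theorem stmt15 {V : Type*} (Γ : V → Finset V) (o : V) (ht : IsTree Γ o) (k : ℕ)
    (hns : ¬ kStable Γ k) (hs : 1 ≤ k → kStable Γ (k - 1))
    (x : V) (A : Set ℕ) (hinf : InfiniteRank Γ x) (hA : ValSet Γ x = A)
    (hk : k ∉ A) :
    ∃ f f' : V → ℕ, MexLabelling Γ f ∧ MexLabelling Γ f' ∧ f x = k ∧ f' x ≠ k := by
  classical
  rw [← hA] at hk
  have hstab : ∀ v, InfiniteRank Γ v → ∀ j < k, j ∈ ValSet Γ v := by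
    intro v hv j hj
    exact hs (by omega) v hv j (by omega)
  have hδex : ∀ v, InfiniteRank Γ v ∧ k ∉ ValSet Γ v →
      ∃ y, y ∈ Γ v ∧ InfiniteRank Γ y ∧ k ∉ ValSet Γ y := by
    intro v hv
    obtain ⟨y, hy, h1, h2⟩ := G3 Γ hv.1 (hstab v hv.1) hv.2
    exact ⟨y, hy, h1, h2⟩
  set δ : V → V := fun v =>
    if h : InfiniteRank Γ v ∧ k ∉ ValSet Γ v then (hδex v h).choose else v with hδdef
  have hδ : ∀ v, InfiniteRank Γ v → k ∉ ValSet Γ v →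
      δ v ∈ Γ v ∧ InfiniteRank Γ (δ v) ∧ k ∉ ValSet Γ (δ v) := by
    intro v h1 h2
    rw [hδdef]
    simp only
    rw [dif_pos ⟨h1, h2⟩]
    exact (hδex v ⟨h1, h2⟩).choose_spec
  have hx' : InfiniteRank Γ x ∧ k ∉ ValSet Γ x := ⟨hinf, hk⟩
  have main : ∀ b₀ : Bool, ∃ f, MexLabelling Γ f ∧
      ∃ j ≥ 1, f x = (up Γ)^[j]
        (fun v => if colV k x b₀ δ ht v = some true then k
          else if InfiniteRank Γ v then k + 1 + (Γ v).sup (gval Γ) else gval Γ v) x := by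
    intro b₀
    set s : V → ℕ := fun v => if colV k x b₀ δ ht v = some true then k
      else if InfiniteRank Γ v then k + 1 + (Γ v).sup (gval Γ) else gval Γ v with hsdef
    obtain ⟨f, hfmex, hfval⟩ :=
      limit_labelling Γ (dep ht) (fun v y hy => dep_child ht hy) s
    exact ⟨f, hfmex, hfval x⟩
  -- the invariant applies to both seeds
  have inv : ∀ b₀ : Bool, ∀ j v,
      (¬ InfiniteRank Γ v → (up Γ)^[j]
        (fun v => if colV k x b₀ δ ht v = some true then k
          else if InfiniteRank Γ v then k + 1 + (Γ v).sup (gval Γ) else gval Γ v) v = gval Γ v) ∧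
      (InfiniteRank Γ v → (up Γ)^[j]
        (fun v => if colV k x b₀ δ ht v = some true then k
          else if InfiniteRank Γ v then k + 1 + (Γ v).sup (gval Γ) else gval Γ v) v ∉ ValSet Γ v) ∧
      (colV k x b₀ δ ht v = some true → (up Γ)^[j]
        (fun v => if colV k x b₀ δ ht v = some true then k
          else if InfiniteRank Γ v then k + 1 + (Γ v).sup (gval Γ) else gval Γ v) v = k) ∧
      (colV k x b₀ δ ht v = some false → (up Γ)^[j]
        (fun v => if colV k x b₀ δ ht v = some true then k
          else if InfiniteRank Γ v then k + 1 + (Γ v).sup (gval Γ) else gval Γ v) v ≠ k) := by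
    intro b₀
    have havoid : ∀ v : V, (k + 1 + (Γ v).sup (gval Γ)) ∉ ValSet Γ v := by
      intro v ⟨y, hy, hya⟩
      have h1 : gval Γ y = k + 1 + (Γ v).sup (gval Γ) := gval_eq Γ hya
      have h2 : gval Γ y ≤ (Γ v).sup (gval Γ) := Finset.le_sup hy
      omega
    apply up_invariant Γ hstab (colV k x b₀ δ ht)
      (colV_P1 ht k x b₀ δ hx' hδ) (colV_P2 ht k x b₀ δ hx' hδ)
      (colV_P3 ht k x b₀ δ hx' hδ)
    · intro v hfin
      have hnt : colV k x b₀ δ ht v ≠ some true := fun hc =>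
        hfin (colV_P1 ht k x b₀ δ hx' hδ v true hc).1
      simp only [if_neg hnt, if_neg hfin]
    · intro v hinfv
      by_cases hc : colV k x b₀ δ ht v = some true
      · simp only [if_pos hc]
        exact (colV_P1 ht k x b₀ δ hx' hδ v true hc).2
      · simp only [if_neg hc, if_pos hinfv]
        exact havoid v
    · intro v hc
      simp only [if_pos hc]
    · intro v hc
      have hnt : colV k x b₀ δ ht v ≠ some true := by rw [hc]; simp
      have hinfv := (colV_P1 ht k x b₀ δ hx' hδ v false hc).1
      simp only [if_neg hnt, if_pos hinfv]
      omega
  obtain ⟨f, hfmex, j, hj1, hj2⟩ := main true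
  obtain ⟨f', hfmex', j', hj1', hj2'⟩ := main false
  refine ⟨f, f', hfmex, hfmex', ?_, ?_⟩
  · rw [hj2]
    exact (inv true j x).2.2.1 (colV_x k x true δ ht)
  · rw [hj2']
    exact (inv false j' x).2.2.2 (colV_x k x false δ ht)
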